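/- Every Hamiltonian graph of order n ≥ 5 with at least n + 3 edges has an orientation of diameter at most n - 2. -/

import Mathlib

open SimpleGraph

/-- `R` is an orientation of the simple graph `G`: every arc of `R` lies on an edge of `G`,
and every edge of `G` receives exactly one of its two possible directions. -/
def IsOrientation {V : Type*} (G : SimpleGraph V) (R : V → V → Prop) : Prop :=
  (∀ u v, R u v → G.Adj u v) ∧ ∀ u v, G.Adj u v → (R u v ↔ ¬ R v u)

/-- `RelPow R k u v` : there is a directed walk of length `k` from `u` to `v`. -/
def RelPow {V : Type*} (R : V → V → Prop) : ℕ → V → V → Prop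
  | 0, u, v => u = v
  | n + 1, u, v => ∃ w, R u w ∧ RelPow R n w v

/-- The digraph `R` has diameter at most `d`: any vertex can reach any other by a
directed walk of length at most `d`. -/
def DiamLE {V : Type*} (R : V → V → Prop) (d : ℕ) : Prop :=
  ∀ u v, ∃ k ≤ d, RelPow R k u v

/-- A digraph is strongly connected if every vertex can reach every other. -/
def StronglyConnected {V : Type*} (R : V → V → Prop) : Prop :=
  ∀ u v, Relation.ReflTransGen R u v

/-- A graph is bridgeless if it is connected and contains no bridge. -/
def Bridgeless {V : Type*} (G : SimpleGraph V) : Prop :=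
  G.Connected ∧ ∀ e, ¬ G.IsBridge e

/-- The graph `G_{n,d}`: the path `u_1 … u_d` is the set of indices `0,…,d-1`,
the clique `K_{n-d-1}` is the set of indices `d,…,n-2`, both endpoints `0` and `d-1`
of the path are joined to all clique vertices, and the extra vertex `u_3'` is the
index `n-1`, joined to `u_2, u_3, u_4`, i.e. to indices `1, 2, 3`. -/
def Gnd (n d : ℕ) : SimpleGraph (Fin n) :=
  SimpleGraph.fromRel (fun i j =>
    ((i : ℕ) + 1 = (j : ℕ) ∧ (j : ℕ) < d) ∨
    (d ≤ (i : ℕ) ∧ (i : ℕ) < n - 1 ∧ d ≤ (j : ℕ) ∧ (j : ℕ) < n - 1) ∨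
    (((i : ℕ) = 0 ∨ (i : ℕ) = d - 1) ∧ d ≤ (j : ℕ) ∧ (j : ℕ) < n - 1) ∨
    ((i : ℕ) = n - 1 ∧ ((j : ℕ) = 1 ∨ (j : ℕ) = 2 ∨ (j : ℕ) = 3)))

/-- The graph `H_{n,n-2}`: the cycle `u_1 … u_{n-1} u_1` is the set of indices
`0,…,n-2` in cyclic order, and the extra vertex `u_3'` is the index `n-1`,
joined to `u_2, u_3, u_4`, i.e. to indices `1, 2, 3`. -/
def Hgraph (n : ℕ) : SimpleGraph (Fin n) :=
  SimpleGraph.fromRel (fun i j =>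
    ((i : ℕ) + 1 = (j : ℕ) ∧ (j : ℕ) ≤ n - 2) ∨
    ((i : ℕ) = 0 ∧ (j : ℕ) = n - 2) ∨
    ((i : ℕ) = n - 1 ∧ ((j : ℕ) = 1 ∨ (j : ℕ) = 2 ∨ (j : ℕ) = 3)))

lemma relpow_trans {V : Type*} {R : V → V → Prop} :
    ∀ {j : ℕ} {k : ℕ} {u v w : V}, RelPow R j u v → RelPow R k v w → RelPow R (j + k) u w := by
  intro j
  induction j with
  | zero => intro k u v w h h'; cases h; simpa using h'
  | succ j ih =>
    rintro k u v w ⟨x, hx, hp⟩ h'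
    rw [Nat.succ_add]
    exact ⟨x, hx, ih hp h'⟩

lemma zval_neg_one {n : ℕ} [NeZero n] : (-1 : ZMod n).val = n - 1 := by
  obtain ⟨m, rfl⟩ := Nat.exists_eq_succ_of_ne_zero (NeZero.ne n)
  simpa using ZMod.val_neg_one m

lemma zval_succ {n : ℕ} [NeZero n] (y : ZMod n) (h : y ≠ -1) : (y + 1).val = y.val + 1 := by
  have hy : y.val < n := ZMod.val_lt y
  have hne : y.val ≠ n - 1 := by
    intro he
    exact h (ZMod.val_injective n (by rw [he, zval_neg_one]))
  have hn1 : 1 ≤ n := Nat.one_le_iff_ne_zero.mpr (NeZero.ne n)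
  have hlt : y.val + 1 < n := by omega
  calc (y + 1).val = (((y.val + 1 : ℕ)) : ZMod n).val := by
        rw [Nat.cast_add, ZMod.natCast_zmod_val, Nat.cast_one]
    _ = y.val + 1 := ZMod.val_cast_of_lt hlt

lemma exists_missed {n : ℕ} [NeZero n] (c d : Fin 3 → ZMod n) :
    ∃ δ : Fin 3 → Bool, ∀ a : ZMod n,
      (fun i => decide ((c i - a).val < (d i - a).val)) ≠ δ := by
  classical
  by_contra h
  push_neg at h
  set pat : ZMod n → Fin 3 → Bool := fun a i => decide ((c i - a).val < (d i - a).val) with hpat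
  set S : Finset (ZMod n) :=
    (Finset.univ.image fun i => c i + 1) ∪ (Finset.univ.image fun i => d i + 1) with hS
  have hchange : ∀ a : ZMod n, pat a ≠ pat (a - 1) → a ∈ S := by
    intro a hne
    by_contra hmem
    apply hne
    funext i
    have hci : c i ≠ a - 1 := by
      intro he
      exact hmem (Finset.mem_union_left _ (Finset.mem_image.mpr
        ⟨i, Finset.mem_univ i, by rw [he]; ring⟩))
    have hdi : d i ≠ a - 1 := by
      intro he
      exact hmem (Finset.mem_union_right _ (Finset.mem_image.mpr
        ⟨i, Finset.mem_univ i, by rw [he]; ring⟩))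
    have hc : (c i - (a - 1)).val = (c i - a).val + 1 := by
      have h1 : c i - (a - 1) = (c i - a) + 1 := by ring
      rw [h1]
      refine zval_succ _ ?_
      intro h2
      apply hci
      linear_combination h2
    have hd : (d i - (a - 1)).val = (d i - a).val + 1 := by
      have h1 : d i - (a - 1) = (d i - a) + 1 := by ring
      rw [h1]
      refine zval_succ _ ?_
      intro h2
      apply hdi
      linear_combination h2
    show decide _ = decide _
    rw [decide_eq_decide, hc, hd]
    omega
  obtain ⟨a1, ha1⟩ := h (fun _ => true)
  obtain ⟨a2, ha2⟩ := h (fun _ => false)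
  have ha1' : pat a1 = fun _ => true := ha1
  have ha2' : pat a2 = fun _ => false := ha2
  have hne12 : pat a1 ≠ pat a2 := by
    rw [ha1', ha2']
    intro hf
    simpa using congrFun hf 0
  have hnc : ∀ a, ∃ x, pat x ≠ pat a := by
    intro a
    by_cases hx : pat a1 = pat a
    · exact ⟨a2, fun he => hne12 (hx.trans he.symm)⟩
    · exact ⟨a1, hx⟩
  have hkey : ∀ a : ZMod n, ∃ u ∈ S, pat u = pat a := by
    intro a
    obtain ⟨x, hx⟩ := hnc a
    have hxa : x ≠ a := fun he => hx (by rw [he])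
    have hv : (a - x).val ≠ 0 := by
      intro h0
      apply hxa
      have h1 : a - x = 0 := (ZMod.val_eq_zero _).mp h0
      linear_combination -h1
    have hex : ∃ k : ℕ, pat (a - ((k + 1 : ℕ) : ZMod n)) ≠ pat a := by
      refine ⟨(a - x).val - 1, ?_⟩
      have h1 : (a - x).val - 1 + 1 = (a - x).val := by omega
      rw [h1, ZMod.natCast_zmod_val]
      have h2 : a - (a - x) = x := by ring
      rw [h2]
      exact hx
    set m := Nat.find hex with hm
    have hspec := Nat.find_spec hex
    set u := a - ((m : ℕ) : ZMod n) with hu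
    have hpu : pat u = pat a := by
      rcases Nat.eq_zero_or_pos m with h0 | h0
      · rw [hu, h0]; norm_num
      · have hmin := Nat.find_min hex (m := m - 1) (by omega)
        push_neg at hmin
        have h1 : m - 1 + 1 = m := by omega
        rwa [h1] at hmin
    have hu1 : u - 1 = a - (((m + 1 : ℕ)) : ZMod n) := by
      rw [hu]; push_cast; ring
    have hchg : pat u ≠ pat (u - 1) := by
      rw [hu1, hpu]
      exact fun he => hspec he.symm
    exact ⟨u, hchange u hchg, hpu⟩
  have himg : (Finset.univ : Finset (Fin 3 → Bool)) ⊆ S.image pat := by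
    intro δ _
    obtain ⟨a, ha⟩ := h δ
    obtain ⟨u, hu, hupat⟩ := hkey a
    exact Finset.mem_image.mpr ⟨u, hu, hupat.trans ha⟩
  have h8 : (Finset.univ : Finset (Fin 3 → Bool)).card = 8 := by
    simp [Finset.card_univ]
  have hcard1 : (Finset.univ : Finset (Fin 3 → Bool)).card ≤ (S.image pat).card :=
    Finset.card_le_card himg
  have hcard2 : (S.image pat).card ≤ S.card := Finset.card_image_le
  have hcard3 : S.card ≤ 6 := by
    refine le_trans (Finset.card_union_le _ _) ?_
    have h1 : (Finset.univ.image fun i : Fin 3 => c i + 1).card ≤ 3 := by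
      refine le_trans Finset.card_image_le ?_
      simp
    have h2 : (Finset.univ.image fun i : Fin 3 => d i + 1).card ≤ 3 := by
      refine le_trans Finset.card_image_le ?_
      simp
    omega
  omega

theorem stmt_9 {V : Type*} [Fintype V] [DecidableEq V] (G : SimpleGraph V)
    (hn : 5 ≤ Fintype.card V) (hham : G.IsHamiltonian)
    (hsize : Fintype.card V + 3 ≤ G.edgeSet.ncard) :
    ∃ R : V → V → Prop, IsOrientation G R ∧ DiamLE R (Fintype.card V - 2) := by
  classical
  obtain ⟨v, p, hp⟩ := hham (by omega)
  set n := Fintype.card V with hnV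
  haveI hnz : NeZero n := ⟨by omega⟩
  have hlength : p.length = n := hp.length_eq
  set f : ZMod n → V := fun a => p.getVert (a.val + 1) with hf
  have hsurj : Function.Surjective f := by
    intro w
    obtain ⟨k, hk, hkle⟩ := Walk.mem_support_iff_exists_getVert.mp (hp.mem_support w)
    rw [hlength] at hkle
    by_cases hk0 : k = 0
    · refine ⟨(-1 : ZMod n), ?_⟩
      simp only [hf]
      rw [zval_neg_one]
      have h1 : n - 1 + 1 = n := by omega
      rw [h1, ← hlength, Walk.getVert_length, ← hk, hk0, Walk.getVert_zero]
    · refine ⟨((k - 1 : ℕ) : ZMod n), ?_⟩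
      simp only [hf]
      have hv : (((k - 1 : ℕ) : ZMod n)).val = k - 1 := ZMod.val_cast_of_lt (by omega)
      rw [hv]
      have h1 : k - 1 + 1 = k := by omega
      rw [h1]; exact hk
  have hbij : Function.Bijective f := by
    rw [Fintype.bijective_iff_surjective_and_card]
    exact ⟨hsurj, by rw [ZMod.card]⟩
  set e := Equiv.ofBijective f hbij with he
  have hfe : ∀ u, f (e.symm u) = u := fun u => e.apply_symm_apply u
  have hsymmf : ∀ a, e.symm (f a) = a := fun a => e.symm_apply_apply a
  have hadjf : ∀ a : ZMod n, G.Adj (f a) (f (a + 1)) := by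
    intro a
    by_cases hlt : a.val + 1 < n
    · have hA : a ≠ -1 := by
        intro he1
        rw [he1, zval_neg_one] at hlt
        omega
      have h1 : (a + 1).val = a.val + 1 := zval_succ a hA
      have h2 := p.adj_getVert_succ (i := a.val + 1) (by rw [hlength]; exact hlt)
      simp only [hf]
      rw [h1]
      exact h2
    · have hv : a.val = n - 1 := by have := ZMod.val_lt a; omega
      have h0 : a + 1 = 0 := by
        have ha : a = -1 := ZMod.val_injective n (by rw [hv, zval_neg_one])
        rw [ha]; ring
      have hadj0 := p.adj_getVert_succ (i := 0) (by rw [hlength]; omega)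
      rw [Walk.getVert_zero] at hadj0
      have hfa : f a = v := by
        simp only [hf]
        rw [hv]
        have h1 : n - 1 + 1 = n := by omega
        rw [h1, ← hlength, Walk.getVert_length]
      have hfa1 : f (a + 1) = p.getVert 1 := by
        simp only [hf]
        rw [h0, ZMod.val_zero]
      rw [hfa, hfa1]
      exact hadj0
  set C : Finset (Sym2 V) := Finset.univ.image (fun a : ZMod n => s(f a, f (a + 1))) with hC
  have h2ne : (2 : ZMod n) ≠ 0 := by
    intro h2
    have h3 : ((2 : ℕ) : ZMod n) = 0 := by push_cast; exact h2
    rw [ZMod.natCast_eq_zero_iff] at h3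
    have := Nat.le_of_dvd (by norm_num) h3
    omega
  have hCinj : Function.Injective (fun a : ZMod n => s(f a, f (a + 1))) := by
    intro a b hab
    simp only [Sym2.eq_iff] at hab
    rcases hab with ⟨h1, h2⟩ | ⟨h1, h2⟩
    · exact hbij.injective h1
    · have ha : a = b + 1 := hbij.injective h1
      have hb : a + 1 = b := hbij.injective h2
      exact absurd (by linear_combination hb - ha) h2ne
  have hCcard : C.card = n := by
    rw [hC, Finset.card_image_of_injective _ hCinj, Finset.card_univ, ZMod.card]
  have hEcard : G.edgeSet.ncard = G.edgeFinset.card := by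
    rw [← coe_edgeFinset, Set.ncard_coe_finset]
  have hT : 3 ≤ (G.edgeFinset \ C).card := by
    have h1 := Finset.le_card_sdiff C G.edgeFinset
    omega
  obtain ⟨t, htsub, htcard⟩ := Finset.exists_subset_card_eq hT
  obtain ⟨e1, e2, e3, h12, h13, h23, hteq⟩ := Finset.card_eq_three.mp htcard
  set E : Fin 3 → Sym2 V := ![e1, e2, e3] with hE
  have hET : ∀ i, E i ∈ G.edgeFinset \ C := by
    intro i
    apply htsub
    rw [hteq]
    fin_cases i <;> simp [hE]
  have hEinj : ∀ i j, E i = E j → i = j := by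
    intro i j hij
    fin_cases i <;> fin_cases j <;>
      first
        | rfl
        | exact absurd hij h12
        | exact absurd hij h13
        | exact absurd hij h23
        | exact absurd hij.symm h12
        | exact absurd hij.symm h13
        | exact absurd hij.symm h23
  have hrep : ∀ i : Fin 3, ∃ cd : ZMod n × ZMod n, E i = s(f cd.1, f cd.2) := by
    intro i
    obtain ⟨x, y, hxy⟩ : ∃ x y, E i = s(x, y) :=
      Sym2.ind (fun x y => ⟨x, y, rfl⟩) (E i)
    exact ⟨(e.symm x, e.symm y), by rw [hxy]; simp only; rw [hfe, hfe]⟩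
  choose cd hcd0 using hrep
  set c : Fin 3 → ZMod n := fun i => (cd i).1 with hcdef
  set d : Fin 3 → ZMod n := fun i => (cd i).2 with hddef
  have hcd : ∀ i, E i = s(f (c i), f (d i)) := hcd0
  have hAdjcd : ∀ i, G.Adj (f (c i)) (f (d i)) := by
    intro i
    have h1 := (Finset.mem_sdiff.mp (hET i)).1
    rw [mem_edgeFinset, hcd i] at h1
    exact h1
  have hnotC : ∀ i, E i ∉ C := fun i => (Finset.mem_sdiff.mp (hET i)).2
  have hne1 : ∀ i, d i ≠ c i + 1 := by
    intro i hcon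
    apply hnotC i
    rw [hC, Finset.mem_image]
    exact ⟨c i, Finset.mem_univ _, by rw [hcd i, hcon]⟩
  have hne2 : ∀ i, c i ≠ d i + 1 := by
    intro i hcon
    apply hnotC i
    rw [hC, Finset.mem_image]
    refine ⟨d i, Finset.mem_univ _, ?_⟩
    rw [hcd i, hcon]
    exact Sym2.eq_swap
  have hcdne : ∀ i, c i ≠ d i := by
    intro i hcon
    exact (hAdjcd i).ne (by rw [hcon])
  obtain ⟨δ, hδ⟩ := exists_missed c d
  set s3 : Fin 3 → ZMod n × ZMod n := fun i => if δ i then (d i, c i) else (c i, d i) with hs3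
  have hs3Adj : ∀ i, G.Adj (f (s3 i).1) (f (s3 i).2) := by
    intro i
    cases hbi : δ i <;> simp only [hs3, hbi, if_true, if_false, Bool.false_eq_true, ite_false,
      ite_true]
    · exact hAdjcd i
    · exact (hAdjcd i).symm
  have hs3ne : ∀ i, (s3 i).2 ≠ (s3 i).1 + 1 ∧ (s3 i).1 ≠ (s3 i).2 + 1 := by
    intro i
    cases hbi : δ i <;> simp only [hs3, hbi, if_true, if_false, Bool.false_eq_true, ite_false,
      ite_true]
    · exact ⟨hne1 i, hne2 i⟩
    · exact ⟨hne2 i, hne1 i⟩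
  have hs3E : ∀ i, s(f (s3 i).1, f (s3 i).2) = E i := by
    intro i
    cases hbi : δ i <;> simp only [hs3, hbi, if_true, if_false, Bool.false_eq_true, ite_false,
      ite_true]
    · exact (hcd i).symm
    · rw [hcd i]; exact Sym2.eq_swap
  have hs3swap : ∀ i j x y, s3 i = (x, y) → s3 j = (y, x) → False := by
    intro i j x y hi hj
    have hEij : E i = E j := by
      rw [← hs3E i, ← hs3E j, hi, hj]
      exact Sym2.eq_swap
    have hij := hEinj i j hEij
    subst hij
    rw [hi] at hj
    have hxy : x = y := (Prod.ext_iff.mp hj).1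
    have h1 := hs3Adj i
    rw [hi] at h1
    exact h1.ne (by rw [hxy])
  have hs3cover : ∀ a : ZMod n, ∃ i, ((s3 i).1 - a).val < ((s3 i).2 - a).val := by
    intro a
    obtain ⟨i, hi⟩ := Function.ne_iff.mp (hδ a)
    refine ⟨i, ?_⟩
    cases hbi : δ i
    · rw [hbi] at hi
      have hP1 : (c i - a).val < (d i - a).val := by simpa using hi
      simpa [hs3, hbi] using hP1
    · rw [hbi] at hi
      have hP1 : ¬ ((c i - a).val < (d i - a).val) := by simpa using hi
      have hvne : (c i - a).val ≠ (d i - a).val := by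
        intro hv
        have h1 : c i - a = d i - a := ZMod.val_injective n hv
        exact hcdne i (by linear_combination h1)
      have h2 : (d i - a).val < (c i - a).val := by omega
      simpa [hs3, hbi] using h2
  have hgap : ∀ i, 2 ≤ ((s3 i).2 - (s3 i).1).val := by
    intro i
    have hyx : (s3 i).2 ≠ (s3 i).1 := by
      intro hcon
      exact (hs3Adj i).ne (by rw [hcon])
    have h0 : ((s3 i).2 - (s3 i).1).val ≠ 0 := by
      intro h0
      apply hyx
      have h1 := (ZMod.val_eq_zero _).mp h0
      linear_combination h1
    have h1 : ((s3 i).2 - (s3 i).1).val ≠ 1 := by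
      intro h1
      apply (hs3ne i).1
      have h2 : ((1:ℕ) : ZMod n) = (s3 i).2 - (s3 i).1 := by
        rw [← h1, ZMod.natCast_zmod_val]
      push_cast at h2
      linear_combination -h2
    omega
  set P : ZMod n → ZMod n → Prop := fun a b =>
    b = a + 1 ∨ (a ≠ b + 1 ∧ b ≠ a + 1 ∧
      ((∃ i, s3 i = (a, b)) ∨ ((∀ i, s3 i ≠ (b, a)) ∧ a.val < b.val))) with hPdef
  have hanti : ∀ a b : ZMod n, a ≠ b → (P a b ↔ ¬ P b a) := by
    intro a b hab
    rw [hPdef]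
    simp only
    constructor
    · rintro (h1 | ⟨hg1, hg2, h3⟩) (h1' | ⟨hg1', hg2', h3'⟩)
      · exact h2ne (by linear_combination - h1 - h1')
      · exact hg1' h1
      · exact hg1 h1'
      · rcases h3 with ⟨i, hi⟩ | ⟨hall, hlt⟩ <;> rcases h3' with ⟨j, hj⟩ | ⟨hall', hlt'⟩
        · exact hs3swap i j _ _ hi hj
        · exact hall' i hi
        · exact hall j hj
        · omega
    · intro hnot
      by_cases h1 : b = a + 1
      · exact Or.inl h1
      by_cases h2 : a = b + 1
      · exact absurd (Or.inl h2) hnot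
      refine Or.inr ⟨h2, h1, ?_⟩
      by_cases h3 : ∃ i, s3 i = (a, b)
      · exact Or.inl h3
      push_neg at h3
      refine Or.inr ⟨?_, ?_⟩
      · intro i hi
        exact hnot (Or.inr ⟨h1, h2, Or.inl ⟨i, hi⟩⟩)
      · have h4 : ¬ (b.val < a.val) := by
          intro hba
          exact hnot (Or.inr ⟨h1, h2, Or.inr ⟨h3, hba⟩⟩)
        have h5 : a.val ≠ b.val := fun hv => hab (ZMod.val_injective n hv)
        omega
  set R : V → V → Prop := fun u w => G.Adj u w ∧ P (e.symm u) (e.symm w) with hR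
  have hstep : ∀ x : ZMod n, R (f x) (f (x + 1)) := by
    intro x
    refine ⟨hadjf x, ?_⟩
    rw [hsymmf, hsymmf, hPdef]
    exact Or.inl rfl
  have hchord : ∀ i, R (f (s3 i).1) (f (s3 i).2) := by
    intro i
    refine ⟨hs3Adj i, ?_⟩
    rw [hsymmf, hsymmf, hPdef]
    exact Or.inr ⟨(hs3ne i).2, (hs3ne i).1, Or.inl ⟨i, rfl⟩⟩
  have hwalk : ∀ (k : ℕ) (x : ZMod n), RelPow R k (f x) (f (x + (k : ℕ))) := by
    intro k
    induction k with
    | zero =>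
      intro x
      show f x = _
      norm_num
    | succ k ih =>
      intro x
      refine ⟨f (x + 1), hstep x, ?_⟩
      have h1 := ih (x + 1)
      have h2 : x + 1 + ((k : ℕ) : ZMod n) = x + (((k + 1 : ℕ)) : ZMod n) := by
        push_cast
        ring
      rwa [h2] at h1
  refine ⟨R, ⟨fun u w h => h.1, ?_⟩, ?_⟩
  · intro u w huw
    have hne : e.symm u ≠ e.symm w := fun hcon => huw.ne (e.symm.injective hcon)
    constructor
    · rintro ⟨_, hpab⟩ ⟨_, hpba⟩
      exact ((hanti _ _ hne).mp hpab) hpba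
    · intro hnot
      refine ⟨huw, (hanti _ _ hne).mpr ?_⟩
      intro hpba
      exact hnot ⟨huw.symm, hpba⟩
  · intro u w
    set a := e.symm u with haa
    set b := e.symm w with hbb
    have hu : f a = u := hfe u
    have hw : f b = w := hfe w
    set m := (b - a).val with hm
    have hmlt : m < n := ZMod.val_lt _
    by_cases hcase : m ≤ n - 2
    · refine ⟨m, hcase, ?_⟩
      have hw1 := hwalk m a
      have hend : a + ((m : ℕ) : ZMod n) = b := by
        rw [hm, ZMod.natCast_zmod_val]
        ring
      rw [hend, hu, hw] at hw1
      exact hw1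
    · have hba : b - a = -1 := by
        have h1 : m = n - 1 := by omega
        exact ZMod.val_injective n (by rw [zval_neg_one, ← hm]; exact h1)
      obtain ⟨i, hi⟩ := hs3cover a
      set x := (s3 i).1 with hx
      set y := (s3 i).2 with hy
      set p1 := (x - a).val with hp1
      set q1 := (y - a).val with hq1
      have hqlt : q1 < n := ZMod.val_lt _
      have hgapi : 2 ≤ (y - x).val := hgap i
      have hqp : q1 - p1 = (y - x).val := by
        have hcast : ((q1 - p1 : ℕ) : ZMod n) = y - x := by
          rw [Nat.cast_sub (le_of_lt hi)]
          rw [hp1, hq1, ZMod.natCast_zmod_val, ZMod.natCast_zmod_val]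
          ring
        rw [← ZMod.val_cast_of_lt (show q1 - p1 < n by omega), hcast]
      have hlen2 : p1 + 1 + (n - 1 - q1) ≤ n - 2 := by omega
      refine ⟨p1 + 1 + (n - 1 - q1), hlen2, ?_⟩
      have hw1 := hwalk p1 a
      have hend1 : a + ((p1 : ℕ) : ZMod n) = x := by
        rw [hp1, ZMod.natCast_zmod_val]
        ring
      rw [hend1, hu] at hw1
      have hstep2 : RelPow R 1 (f x) (f y) := ⟨f y, hchord i, rfl⟩
      have hw3 := hwalk (n - 1 - q1) y
      have hend3 : y + (((n - 1 - q1 : ℕ)) : ZMod n) = b := by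
        rw [hq1]
        rw [Nat.cast_sub (by omega : (y - a).val ≤ n - 1), Nat.cast_sub (by omega : 1 ≤ n),
          ZMod.natCast_self, ZMod.natCast_zmod_val]
        push_cast
        linear_combination - hba
      rw [hend3, hw] at hw3
      have htot := relpow_trans hw1 (relpow_trans hstep2 hw3)
      have harith : p1 + (1 + (n - 1 - q1)) = p1 + 1 + (n - 1 - q1) := by omega
      rwa [harith] at htot
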